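/- Let G be a directed graph on N vertices with adjacency matrix A. For all distinct vertices i, j, the number of Hamiltonian paths from i to j equals ∑_{D ∈ 𝒟} (−1)^{N−|D|} ((A_D)^{N−1})_{ij}, where 𝒟 is the collection of weakly connected dominating subsets D of V (i.e., D weakly connected with D ∪ N(D) = V). -/

import Mathlib

open scoped Classical
open Finset

/-- Restriction of a matrix to a subset of indices (zero outside `S × S`). -/
def restrict {N : ℕ} {R : Type} [Zero R] (M : Matrix (Fin N) (Fin N) R) (S : Finset (Fin N)) :
    Matrix (Fin N) (Fin N) R :=
  fun i j => if i ∈ S ∧ j ∈ S then M i j else 0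

/-- The subgraph induced by `C` is weakly connected. -/
def WConn {N : ℕ} (E : Fin N → Fin N → Prop) (C : Finset (Fin N)) : Prop :=
  ∀ i ∈ C, ∀ j ∈ C,
    Relation.ReflTransGen (fun a b => a ∈ C ∧ b ∈ C ∧ (E a b ∨ E b a)) i j

/-- The weak neighborhood of `C`: vertices outside `C` with an edge to or from `C`. -/
noncomputable def wNbhd {N : ℕ} (E : Fin N → Fin N → Prop) (C : Finset (Fin N)) :
    Finset (Fin N) :=
  Finset.univ.filter (fun i => i ∉ C ∧ ∃ j ∈ C, E i j ∨ E j i)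


private lemma pow_apply_walks {N : ℕ} (M : Matrix (Fin N) (Fin N) ℤ) :
    ∀ (k : ℕ) (i j : Fin N),
      (M ^ k) i j =
        ∑ w ∈ (Finset.univ : Finset (Fin (k+1) → Fin N)).filter
            (fun w => w 0 = i ∧ w (Fin.last k) = j),
          ∏ m : Fin k, M (w m.castSucc) (w m.succ) := by
  intro k
  induction k with
  | zero =>
    intro i j
    rw [pow_zero, Matrix.one_apply]
    rw [Finset.sum_filter]
    by_cases h : i = j
    · subst h
      have : (Finset.univ : Finset (Fin 1 → Fin N)).filter (fun w => w 0 = i ∧ w (Fin.last 0) = i) = {fun _ => i} := by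
        ext w
        simp only [Finset.mem_filter, Finset.mem_univ, true_and, Finset.mem_singleton]
        constructor
        · rintro ⟨h1, -⟩; funext m; rw [Subsingleton.elim m 0, h1]
        · rintro rfl; exact ⟨rfl, rfl⟩
      rw [← Finset.sum_filter, this]
      simp
    · have : (Finset.univ : Finset (Fin 1 → Fin N)).filter (fun w => w 0 = i ∧ w (Fin.last 0) = j) = ∅ := by
        ext w
        simp only [Finset.mem_filter, Finset.mem_univ, true_and, Finset.notMem_empty, iff_false, not_and]
        intro h1 h2
        exact h (by rw [← h1]; exact h2)
      rw [← Finset.sum_filter, this]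
      simp [h]
  | succ k ih =>
    intro i j
    rw [pow_succ', Matrix.mul_apply]
    rw [Finset.sum_filter, ← Equiv.sum_comp (Fin.consEquiv (fun _ => Fin N))]
    simp only [Fin.consEquiv_apply]
    rw [Fintype.sum_prod_type]
    have hterm : ∀ (a : Fin N) (u : Fin (k+1) → Fin N),
        (if (Fin.cons a u : Fin (k+2) → Fin N) 0 = i ∧ (Fin.cons a u : Fin (k+2) → Fin N) (Fin.last (k+1)) = j then
          ∏ m : Fin (k+1), M ((Fin.cons a u : Fin (k+2) → Fin N) m.castSucc) ((Fin.cons a u : Fin (k+2) → Fin N) m.succ) else 0)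
        = if a = i ∧ u (Fin.last k) = j then M a (u 0) * ∏ m : Fin k, M (u m.castSucc) (u m.succ) else 0 := by
      intro a u
      have h1 : (Fin.cons a u : Fin (k+2) → Fin N) 0 = a := rfl
      have h2 : (Fin.cons a u : Fin (k+2) → Fin N) (Fin.last (k+1)) = u (Fin.last k) := by
        rw [← Fin.succ_last, Fin.cons_succ]
      have h3 : ∏ m : Fin (k+1), M ((Fin.cons a u : Fin (k+2) → Fin N) m.castSucc) ((Fin.cons a u : Fin (k+2) → Fin N) m.succ)
          = M a (u 0) * ∏ m : Fin k, M (u m.castSucc) (u m.succ) := by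
        rw [Fin.prod_univ_succ]
        simp only [Fin.castSucc_zero, Fin.cons_zero, Fin.cons_succ, ← Fin.succ_castSucc]
      rw [h1, h2, h3]
    simp_rw [hterm]
    have hswap : ∀ u : Fin (k+1) → Fin N,
        (∑ a : Fin N, if a = i ∧ u (Fin.last k) = j then M a (u 0) * ∏ m : Fin k, M (u m.castSucc) (u m.succ) else 0)
        = if u (Fin.last k) = j then M i (u 0) * ∏ m : Fin k, M (u m.castSucc) (u m.succ) else 0 := by
      intro u
      simp [ite_and]
    rw [Finset.sum_comm]
    simp_rw [hswap]
    -- now LHS : ∑ x, M i x * ih-sum ; RHS : ∑ u, if last = j then M i (u 0) * P u else 0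
    simp_rw [ih, Finset.sum_filter, Finset.mul_sum, mul_ite, mul_zero]
    rw [Finset.sum_comm]
    refine Finset.sum_congr rfl fun u _ => ?_
    by_cases hj : u (Fin.last k) = j
    · simp [hj, ite_and, mul_comm]
    · simp [hj, ite_and]

private def rstep {N : ℕ} (E : Fin N → Fin N → Prop) (D : Finset (Fin N)) :
    Fin N → Fin N → Prop :=
  fun a b => a ∈ D ∧ b ∈ D ∧ (E a b ∨ E b a)

private def reachC {N : ℕ} (E : Fin N → Fin N → Prop) (s : Fin N) (D : Finset (Fin N))
    (v : Fin N) : Prop :=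
  Relation.ReflTransGen (rstep E D) s v

private noncomputable def compC {N : ℕ} (E : Fin N → Fin N → Prop) (s : Fin N)
    (D : Finset (Fin N)) : Finset (Fin N) :=
  D.filter (reachC E s D)

section
variable {N : ℕ} {E : Fin N → Fin N → Prop} {s : Fin N}

private lemma rstep_symm (D : Finset (Fin N)) : Symmetric (rstep E D) :=
  fun _ _ ⟨ha, hb, he⟩ => ⟨hb, ha, he.symm⟩

private lemma reach_mono {D D' : Finset (Fin N)} (h : D ⊆ D') {v : Fin N}
    (hv : reachC E s D v) : reachC E s D' v := by
  induction hv with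
  | refl => exact Relation.ReflTransGen.refl
  | tail _ hbc ih => exact ih.tail ⟨h hbc.1, h hbc.2.1, hbc.2.2⟩

private lemma compC_subset (D : Finset (Fin N)) : compC E s D ⊆ D := Finset.filter_subset _ _

private lemma mem_compC {D v} : v ∈ compC E s D ↔ v ∈ D ∧ reachC E s D v := Finset.mem_filter.trans (by simp)

private lemma compC_closed {D : Finset (Fin N)} {u v : Fin N}
    (hu : u ∈ compC E s D) (hv : v ∈ D) (he : E u v ∨ E v u) : v ∈ compC E s D :=
  mem_compC.2 ⟨hv, (mem_compC.1 hu).2.tail ⟨(mem_compC.1 hu).1, hv, he⟩⟩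

private lemma reach_compC {D : Finset (Fin N)} {v : Fin N} (h : reachC E s D v) :
    reachC E s (compC E s D) v := by
  induction h with
  | refl => exact Relation.ReflTransGen.refl
  | tail hab hbc ih =>
    rename_i b c
    have hb : b ∈ compC E s D := mem_compC.2 ⟨hbc.1, hab⟩
    have hc : c ∈ compC E s D := mem_compC.2 ⟨hbc.2.1, hab.tail hbc⟩
    exact ih.tail ⟨hb, hc, hbc.2.2⟩

private lemma compC_idem (D : Finset (Fin N)) : compC E s (compC E s D) = compC E s D := by
  refine Finset.Subset.antisymm (compC_subset _) (fun v hv => ?_)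
  exact mem_compC.2 ⟨hv, reach_compC (mem_compC.1 hv).2⟩

private lemma wconn_iff_comp {S D : Finset (Fin N)} (hs : s ∈ S) (hWC : WConn E S)
    (hSD : S ⊆ D) : WConn E D ↔ compC E s D = D := by
  constructor
  · intro h
    refine Finset.Subset.antisymm (compC_subset _) (fun v hv => ?_)
    exact mem_compC.2 ⟨hv, h s (hSD hs) v hv⟩
  · intro h u hu v hv
    have hu2 : u ∈ compC E s D := by rw [h]; exact hu
    have hv2 : v ∈ compC E s D := by rw [h]; exact hv
    have hu' : reachC E s D u := (mem_compC.1 hu2).2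
    have hv' : reachC E s D v := (mem_compC.1 hv2).2
    have : Std.Symm (rstep E D) := ⟨fun a b h => rstep_symm D h⟩
    exact (Std.Symm.symm (r := Relation.ReflTransGen (rstep E D)) _ _ hu').trans hv'

private lemma S_subset_compC {S D : Finset (Fin N)} (hs : s ∈ S) (hWC : WConn E S)
    (hSD : S ⊆ D) : S ⊆ compC E s D := fun x hx =>
  mem_compC.2 ⟨hSD hx, reach_mono hSD (hWC s hs x hx)⟩

private lemma compC_union {S C R : Finset (Fin N)} (hs : s ∈ S) (hSC : S ⊆ C)
    (hC : compC E s C = C) (hR : R ⊆ (C ∪ wNbhd E C)ᶜ) : compC E s (C ∪ R) = C := by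
  refine Finset.Subset.antisymm (fun v hv => ?_) (fun v hv => ?_)
  · -- any reachable vertex lies in C
    have key : ∀ v, reachC E s (C ∪ R) v → v ∈ C := by
      intro v h
      induction h with
      | refl => exact hSC hs
      | tail hab hbc ih =>
        rename_i b c
        have hbC : b ∈ C := ih
        by_contra hcC
        have hcR : c ∈ R := by
          rcases Finset.mem_union.1 hbc.2.1 with h' | h'
          · exact absurd h' hcC
          · exact h'
        have : c ∈ wNbhd E C := by
          simp only [wNbhd, Finset.mem_filter, Finset.mem_univ, true_and]
          exact ⟨hcC, b, hbC, hbc.2.2.symm⟩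
        have := hR hcR
        rw [Finset.mem_compl] at this
        exact this (Finset.mem_union.2 (Or.inr ‹c ∈ wNbhd E C›))
    exact key v (mem_compC.1 hv).2
  · have hv2 : v ∈ compC E s C := by rw [hC]; exact hv
    have : reachC E s C v := (mem_compC.1 hv2).2
    exact mem_compC.2 ⟨Finset.mem_union.2 (Or.inl hv), reach_mono Finset.subset_union_left this⟩

private lemma sdiff_compC_subset {S D : Finset (Fin N)} (hs : s ∈ S) (hWC : WConn E S)
    (hSD : S ⊆ D) : D \ compC E s D ⊆ (compC E s D ∪ wNbhd E (compC E s D))ᶜ := by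
  intro v hv
  rw [Finset.mem_sdiff] at hv
  rw [Finset.mem_compl, Finset.mem_union]
  rintro (h | h)
  · exact hv.2 h
  · simp only [wNbhd, Finset.mem_filter, Finset.mem_univ, true_and] at h
    obtain ⟨-, u, hu, he⟩ := h
    exact hv.2 (compC_closed hu hv.1 he.symm)

end

private lemma key_sum {n : ℕ} (E : Fin (n+1) → Fin (n+1) → Prop) (S : Finset (Fin (n+1)))
    (hne : S.Nonempty) (hWC : WConn E S) :
    ∑ D ∈ Finset.univ.powerset.filter
        (fun D => (WConn E D ∧ D ∪ wNbhd E D = Finset.univ) ∧ S ⊆ D),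
      (-1 : ℤ) ^ D.card
    = if S = Finset.univ then (-1) ^ (n+1) else 0 := by
  obtain ⟨s, hs⟩ := hne
  -- rewrite the index set using compC
  have hAeq : Finset.univ.powerset.filter
        (fun D => (WConn E D ∧ D ∪ wNbhd E D = Finset.univ) ∧ S ⊆ D)
      = (Finset.univ.powerset.filter
          (fun D : Finset (Fin (n+1)) => S ⊆ D ∧ compC E s D = D)).filter
          (fun D => D ∪ wNbhd E D = Finset.univ) := by
    rw [Finset.filter_filter]
    ext D
    simp only [Finset.mem_filter, Finset.mem_powerset]
    constructor
    · rintro ⟨hp, ⟨hw, hd⟩, hS⟩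
      exact ⟨hp, ⟨hS, (wconn_iff_comp hs hWC hS).1 hw⟩, hd⟩
    · rintro ⟨hp, ⟨hS, hc⟩, hd⟩
      exact ⟨hp, ⟨(wconn_iff_comp hs hWC hS).2 hc, hd⟩, hS⟩
  rw [hAeq, Finset.sum_filter]
  have hinner : ∀ C : Finset (Fin (n+1)),
      (if C ∪ wNbhd E C = Finset.univ then ((-1 : ℤ) ^ C.card) else 0)
      = ∑ R ∈ ((C ∪ wNbhd E C)ᶜ).powerset, (-1 : ℤ) ^ (C.card + R.card) := by
    intro C
    simp_rw [pow_add, ← Finset.mul_sum, Finset.sum_powerset_neg_one_pow_card]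
    by_cases h : C ∪ wNbhd E C = Finset.univ
    · rw [if_pos h, if_pos (by rw [h]; exact Finset.compl_univ), mul_one]
    · have hne' : ¬ ((C ∪ wNbhd E C)ᶜ = ∅) := fun hc => h ((Finset.compl_eq_empty_iff _).1 hc)
      rw [if_neg h, if_neg hne', mul_zero]
  simp_rw [hinner]
  rw [Finset.sum_sigma' (Finset.univ.powerset.filter
        (fun D : Finset (Fin (n+1)) => S ⊆ D ∧ compC E s D = D))
      (fun C => ((C ∪ wNbhd E C)ᶜ).powerset)
      (fun C R => (-1 : ℤ) ^ (C.card + R.card))]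
  -- big bijection
  have hbij : ∑ p ∈ (Finset.univ.powerset.filter
        (fun D : Finset (Fin (n+1)) => S ⊆ D ∧ compC E s D = D)).sigma
          (fun C => ((C ∪ wNbhd E C)ᶜ).powerset),
        (-1 : ℤ) ^ (p.1.card + p.2.card)
      = ∑ D ∈ Finset.univ.powerset.filter (fun D => S ⊆ D), (-1 : ℤ) ^ D.card := by
    refine Finset.sum_nbij' (fun p => p.1 ∪ p.2) (fun D => ⟨compC E s D, D \ compC E s D⟩)
        ?_ ?_ ?_ ?_ ?_
    · rintro ⟨C, R⟩ hp
      rw [Finset.mem_sigma, Finset.mem_filter, Finset.mem_powerset] at hp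
      rw [Finset.mem_filter, Finset.mem_powerset]
      exact ⟨Finset.subset_univ _, hp.1.2.1.trans Finset.subset_union_left⟩
    · intro D hD
      rw [Finset.mem_filter, Finset.mem_powerset] at hD
      rw [Finset.mem_sigma, Finset.mem_filter, Finset.mem_powerset, Finset.mem_powerset]
      exact ⟨⟨Finset.subset_univ _, S_subset_compC hs hWC hD.2, compC_idem D⟩,
        sdiff_compC_subset hs hWC hD.2⟩
    · rintro ⟨C, R⟩ hp
      rw [Finset.mem_sigma, Finset.mem_filter, Finset.mem_powerset, Finset.mem_powerset] at hp
      have h1 : compC E s (C ∪ R) = C := compC_union hs hp.1.2.1 hp.1.2.2 hp.2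
      have hdisj : Disjoint C R := by
        rw [Finset.disjoint_left]
        intro a haC haR
        have := hp.2 haR
        rw [Finset.mem_compl] at this
        exact this (Finset.mem_union.2 (Or.inl haC))
      have h2 : (C ∪ R) \ C = R := Finset.union_sdiff_cancel_left hdisj
      show (⟨compC E s (C ∪ R), (C ∪ R) \ compC E s (C ∪ R)⟩ :
          Σ _ : Finset (Fin (n+1)), Finset (Fin (n+1))) = ⟨C, R⟩
      rw [h1, h2]
    · intro D hD
      rw [Finset.mem_filter, Finset.mem_powerset] at hD
      exact Finset.union_sdiff_of_subset (compC_subset D)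
    · rintro ⟨C, R⟩ hp
      rw [Finset.mem_sigma, Finset.mem_filter, Finset.mem_powerset, Finset.mem_powerset] at hp
      have hdisj : Disjoint C R := by
        rw [Finset.disjoint_left]
        intro a haC haR
        have := hp.2 haR
        rw [Finset.mem_compl] at this
        exact this (Finset.mem_union.2 (Or.inl haC))
      rw [Finset.card_union_of_disjoint hdisj]
  rw [hbij]
  -- final evaluation
  have hfinal : ∑ D ∈ Finset.univ.powerset.filter (fun D => S ⊆ D), (-1 : ℤ) ^ D.card
      = ∑ X ∈ Sᶜ.powerset, (-1 : ℤ) ^ (S.card + X.card) := by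
    refine Finset.sum_nbij' (fun D => D \ S) (fun X => S ∪ X) ?_ ?_ ?_ ?_ ?_
    · intro D hD
      rw [Finset.mem_filter] at hD
      rw [Finset.mem_powerset]
      intro v hv
      rw [Finset.mem_sdiff] at hv
      rw [Finset.mem_compl]
      exact hv.2
    · intro X hX
      rw [Finset.mem_powerset] at hX
      rw [Finset.mem_filter, Finset.mem_powerset]
      exact ⟨Finset.subset_univ _, Finset.subset_union_left⟩
    · intro D hD
      rw [Finset.mem_filter] at hD
      exact Finset.union_sdiff_of_subset hD.2
    · intro X hX
      rw [Finset.mem_powerset] at hX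
      refine Finset.union_sdiff_cancel_left ?_
      rw [Finset.disjoint_left]
      intro a haS haX
      have := hX haX
      rw [Finset.mem_compl] at this
      exact this haS
    · intro D hD
      rw [Finset.mem_filter] at hD
      rw [← Finset.card_sdiff_add_card_eq_card hD.2, Nat.add_comm]
  rw [hfinal]
  simp_rw [pow_add, ← Finset.mul_sum, Finset.sum_powerset_neg_one_pow_card]
  by_cases h : S = Finset.univ
  · have hc : Sᶜ = ∅ := by rw [h, Finset.compl_univ]
    rw [if_pos hc, if_pos h, mul_one, h, Finset.card_univ, Fintype.card_fin]; ring
  · have hne' : ¬ (Sᶜ = ∅) := fun hc => h ((Finset.compl_eq_empty_iff _).1 hc)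
    rw [if_neg hne', if_neg h, mul_zero]

private lemma restrict_pow_count {n : ℕ} (E : Fin (n+1) → Fin (n+1) → Prop)
    (A : Matrix (Fin (n+1)) (Fin (n+1)) ℤ) (hA : ∀ a b, A a b = if E a b then 1 else 0)
    (D : Finset (Fin (n+1))) (i j : Fin (n+1)) :
    (restrict A D ^ n) i j =
      ∑ w ∈ (Finset.univ : Finset (Fin (n+1) → Fin (n+1))).filter
          (fun w => w 0 = i ∧ w (Fin.last n) = j ∧ ∀ m : Fin n, E (w m.castSucc) (w m.succ)),
        (if ∀ m : Fin n, w m.castSucc ∈ D ∧ w m.succ ∈ D then (1:ℤ) else 0) := by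
  rw [pow_apply_walks]
  have hentry : ∀ a b, restrict A D a b
      = if (a ∈ D ∧ b ∈ D ∧ E a b) then (1:ℤ) else 0 := by
    intro a b
    simp only [_root_.restrict, hA]
    by_cases h1 : a ∈ D <;> by_cases h2 : b ∈ D <;> by_cases h3 : E a b <;>
      simp [h1, h2, h3]
  have hprod : ∀ w : Fin (n+1) → Fin (n+1),
      (∏ m : Fin n, restrict A D (w m.castSucc) (w m.succ))
      = if (∀ m : Fin n, w m.castSucc ∈ D ∧ w m.succ ∈ D ∧ E (w m.castSucc) (w m.succ))
          then (1:ℤ) else 0 := by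
    intro w
    simp_rw [hentry]
    rw [Fintype.prod_boole]
    simp
  simp_rw [hprod]
  rw [Finset.sum_filter, Finset.sum_filter]
  refine Finset.sum_congr rfl fun w _ => ?_
  have hx : (∀ m : Fin n, w m.castSucc ∈ D ∧ w m.succ ∈ D ∧ E (w m.castSucc) (w m.succ))
      ↔ ((∀ m : Fin n, E (w m.castSucc) (w m.succ)) ∧
          ∀ m : Fin n, w m.castSucc ∈ D ∧ w m.succ ∈ D) := by
    constructor
    · intro h
      exact ⟨fun m => (h m).2.2, fun m => ⟨(h m).1, (h m).2.1⟩⟩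
    · rintro ⟨h1, h2⟩ m
      exact ⟨(h2 m).1, (h2 m).2, h1 m⟩
  split_ifs <;> tauto

theorem stmt11 (n : ℕ) (E : Fin (n + 1) → Fin (n + 1) → Prop)
    (A : Matrix (Fin (n + 1)) (Fin (n + 1)) ℤ)
    (hA : ∀ i j, A i j = if E i j then 1 else 0)
    (i j : Fin (n + 1)) (hij : i ≠ j) :
    (Nat.card {w : Fin (n + 1) → Fin (n + 1) //
        Function.Bijective w ∧ w 0 = i ∧ w (Fin.last n) = j ∧
        ∀ m : Fin n, E (w m.castSucc) (w m.succ)} : ℤ)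
      = ∑ D ∈ Finset.univ.powerset.filter
            (fun D : Finset (Fin (n + 1)) =>
              WConn E D ∧ D ∪ wNbhd E D = Finset.univ),
          (-1) ^ (n + 1 - D.card) * (restrict A D ^ n) i j := by
  classical
  have h1 : ∑ D ∈ Finset.univ.powerset.filter
            (fun D : Finset (Fin (n + 1)) =>
              WConn E D ∧ D ∪ wNbhd E D = Finset.univ),
          (-1 : ℤ) ^ (n + 1 - D.card) * (restrict A D ^ n) i j
      = ∑ w ∈ (Finset.univ : Finset (Fin (n+1) → Fin (n+1))).filter
          (fun w => w 0 = i ∧ w (Fin.last n) = j ∧ ∀ m : Fin n, E (w m.castSucc) (w m.succ)),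
        (if Finset.image w Finset.univ = Finset.univ then (1:ℤ) else 0) := by
    simp_rw [restrict_pow_count E A hA _ i j, Finset.mul_sum]
    rw [Finset.sum_comm]
    refine Finset.sum_congr rfl fun w hw => ?_
    rw [Finset.mem_filter] at hw
    obtain ⟨-, h0, hl, he⟩ := hw
    -- n ≠ 0
    have hn0 : n ≠ 0 := by
      intro h
      have hlast : Fin.last n = 0 := by
        ext
        simp [h]
      exact hij (by rw [← h0, ← hl, hlast])
    -- membership iff support
    have hmemiff : ∀ D : Finset (Fin (n+1)),
        (∀ m : Fin n, w m.castSucc ∈ D ∧ w m.succ ∈ D)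
        ↔ Finset.image w Finset.univ ⊆ D := by
      intro D
      rw [Finset.image_subset_iff]
      constructor
      · intro h m _
        by_cases hm : (m : ℕ) < n
        · exact (show m = Fin.castSucc ⟨m.1, hm⟩ from Fin.ext rfl) ▸ (h ⟨m.1, hm⟩).1
        · have hm' : (m : ℕ) = n := le_antisymm (Nat.lt_succ_iff.1 m.isLt) (le_of_not_gt hm)
          have hn1 : n - 1 < n := Nat.pred_lt hn0
          have hmeq : m = Fin.succ ⟨n-1, hn1⟩ := Fin.ext (by simp [hm']; omega)
          exact hmeq ▸ (h ⟨n-1, hn1⟩).2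
      · intro h m
        exact ⟨h _ (Finset.mem_univ _), h _ (Finset.mem_univ _)⟩
    -- support is weakly connected
    have hreach : ∀ a : Fin (n+1),
        Relation.ReflTransGen (fun x y => x ∈ Finset.image w Finset.univ ∧
          y ∈ Finset.image w Finset.univ ∧ (E x y ∨ E y x)) (w 0) (w a) := by
      intro a
      induction a using Fin.induction with
      | zero => exact Relation.ReflTransGen.refl
      | succ m ih =>
        exact ih.tail ⟨Finset.mem_image_of_mem _ (Finset.mem_univ _),
          Finset.mem_image_of_mem _ (Finset.mem_univ _), Or.inl (he m)⟩
    have hWCS : WConn E (Finset.image w Finset.univ) := by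
      intro u hu v hv
      obtain ⟨a, -, rfl⟩ := Finset.mem_image.1 hu
      obtain ⟨b, -, rfl⟩ := Finset.mem_image.1 hv
      have hsym : Symmetric (fun x y => x ∈ Finset.image w Finset.univ ∧
          y ∈ Finset.image w Finset.univ ∧ (E x y ∨ E y x)) :=
        fun x y ⟨p, q, r⟩ => ⟨q, p, r.symm⟩
      have : Std.Symm (fun x y => x ∈ Finset.image w Finset.univ ∧
            y ∈ Finset.image w Finset.univ ∧ (E x y ∨ E y x)) := ⟨fun a b h => hsym h⟩
      exact (Std.Symm.symm (r := Relation.ReflTransGen (fun x y => x ∈ Finset.image w Finset.univ ∧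
            y ∈ Finset.image w Finset.univ ∧ (E x y ∨ E y x))) _ _ (hreach a)).trans (hreach b)
    have hSne : (Finset.image w Finset.univ).Nonempty :=
      ⟨w 0, Finset.mem_image_of_mem _ (Finset.mem_univ 0)⟩
    -- rewrite the inner sum
    have step1 : ∀ D : Finset (Fin (n+1)),
        ((-1 : ℤ) ^ (n + 1 - D.card) *
          if ∀ m : Fin n, w m.castSucc ∈ D ∧ w m.succ ∈ D then (1:ℤ) else 0)
        = (if Finset.image w Finset.univ ⊆ D then (-1 : ℤ) ^ (n + 1 - D.card) else 0) := by
      intro D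
      rw [if_congr (hmemiff D) rfl rfl]
      by_cases h : Finset.image w Finset.univ ⊆ D
      · rw [if_pos h, if_pos h, mul_one]
      · rw [if_neg h, if_neg h, mul_zero]
    simp_rw [step1]
    rw [← Finset.sum_filter, Finset.filter_filter]
    have step2 : ∀ D : Finset (Fin (n+1)), D ∈ Finset.univ.powerset.filter
          (fun D => (WConn E D ∧ D ∪ wNbhd E D = Finset.univ) ∧
            Finset.image w Finset.univ ⊆ D) →
        (-1 : ℤ) ^ (n + 1 - D.card) = (-1) ^ (n+1) * (-1) ^ D.card := by
      intro D hD
      have hc : D.card ≤ n + 1 := by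
        have := Finset.card_le_card (Finset.subset_univ D)
        simpa [Finset.card_univ] using this
      have h2 : ((-1 : ℤ)) ^ (n+1) = (-1) ^ (n + 1 - D.card) * (-1) ^ D.card := by
        rw [← pow_add, Nat.sub_add_cancel hc]
      rw [h2, mul_assoc, ← pow_add, Even.neg_one_pow ⟨D.card, rfl⟩, mul_one]
    rw [Finset.sum_congr rfl step2, ← Finset.mul_sum,
      key_sum E (Finset.image w Finset.univ) hSne hWCS]
    by_cases h : Finset.image w Finset.univ = Finset.univ
    · rw [if_pos h, if_pos h, ← pow_add, Even.neg_one_pow ⟨n+1, rfl⟩]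
    · rw [if_neg h, if_neg h, mul_zero]
  rw [h1, Finset.sum_boole]
  congr 1
  rw [Nat.card_eq_fintype_card, Fintype.card_subtype, Finset.filter_filter]
  congr 1
  ext w
  simp only [Finset.mem_filter, Finset.mem_univ, true_and]
  have hbij : Function.Bijective w ↔ Finset.image w Finset.univ = Finset.univ := by
    constructor
    · intro hb
      refine Finset.eq_univ_of_forall fun v => ?_
      obtain ⟨a, ha⟩ := hb.2 v
      exact Finset.mem_image.2 ⟨a, Finset.mem_univ a, ha⟩
    · intro him
      refine Finite.surjective_iff_bijective.1 fun v => ?_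
      have hv : v ∈ Finset.image w Finset.univ := by rw [him]; exact Finset.mem_univ v
      obtain ⟨a, -, ha⟩ := Finset.mem_image.1 hv
      exact ⟨a, ha⟩
  constructor
  · rintro ⟨hb, h0, hl, he⟩
    exact ⟨⟨h0, hl, he⟩, hbij.1 hb⟩
  · rintro ⟨⟨h0, hl, he⟩, him⟩
    exact ⟨hbij.2 him, h0, hl, he⟩
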